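/- Every global K-graph is a weakly connected, asemicyclic and W-E-functional oriented graph that has an inner vertex. -/

import Mathlib

namespace PluralCuts

/-- The two horizontal directions: west and east. -/
inductive XDir : Type
  | W
  | E
deriving DecidableEq

/-- The two vertical directions: north and south. -/
inductive YDir : Type
  | N
  | S
deriving DecidableEq

/-- The other element of `{W, E}`. -/
def XDir.other : XDir → XDir
  | .W => .E
  | .E => .W

/-- A helper choosing between two values according to an `XDir`. -/
def pick {α : Type*} (w e : α) : XDir → α
  | .W => w
  | .E => e

/-- A digraph on (a finite set of) natural-number vertices: a finite set of
vertices together with a finite set of edges (ordered pairs). -/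
structure DG : Type where
  verts : Finset ℕ
  edges : Finset (ℕ × ℕ)

namespace DG

/-- `D` is an oriented graph: edges lie between vertices, the edge relation is
irreflexive and antisymmetric, and the vertex set is nonempty. -/
def IsOriented (D : DG) : Prop :=
  (∀ e ∈ D.edges, e.1 ∈ D.verts ∧ e.2 ∈ D.verts) ∧
  (∀ e ∈ D.edges, e.1 ≠ e.2) ∧
  (∀ a b : ℕ, (a, b) ∈ D.edges → (b, a) ∉ D.edges) ∧
  D.verts.Nonempty

/-- A `W`-vertex: no edge ends in it. -/
def isWVert (D : DG) (a : ℕ) : Prop := a ∈ D.verts ∧ ∀ b, (b, a) ∉ D.edges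

/-- An `E`-vertex: no edge begins in it. -/
def isEVert (D : DG) (a : ℕ) : Prop := a ∈ D.verts ∧ ∀ b, (a, b) ∉ D.edges

/-- An inner vertex: some edge ends in it and some edge begins in it. -/
def isInner (D : DG) (a : ℕ) : Prop :=
  a ∈ D.verts ∧ (∃ b, (b, a) ∈ D.edges) ∧ (∃ b, (a, b) ∈ D.edges)

/-- A `W`-edge: an edge beginning in a `W`-vertex. -/
def isWEdge (D : DG) (e : ℕ × ℕ) : Prop := e ∈ D.edges ∧ D.isWVert e.1

/-- An `E`-edge: an edge ending in an `E`-vertex. -/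
def isEEdge (D : DG) (e : ℕ × ℕ) : Prop := e ∈ D.edges ∧ D.isEVert e.2

/-- An `X`-edge, for `X ∈ {W, E}`. -/
def isXEdge (D : DG) : XDir → (ℕ × ℕ) → Prop
  | .W => D.isWEdge
  | .E => D.isEEdge

/-- An inner edge: it begins and ends in inner vertices. -/
def isInnerEdge (D : DG) (e : ℕ × ℕ) : Prop :=
  e ∈ D.edges ∧ D.isInner e.1 ∧ D.isInner e.2

/-- A functional `W`-edge `(a,b)`: `(a,c) ∈ D` implies `b = c`. -/
def funcWEdge (D : DG) (e : ℕ × ℕ) : Prop :=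
  D.isWEdge e ∧ ∀ c, (e.1, c) ∈ D.edges → c = e.2

/-- A functional `E`-edge `(b,a)`: `(c,a) ∈ D` implies `b = c`. -/
def funcEEdge (D : DG) (e : ℕ × ℕ) : Prop :=
  D.isEEdge e ∧ ∀ c, (c, e.2) ∈ D.edges → c = e.1

/-- `D` is `W`-`E`-functional: all its `W`-edges and `E`-edges are functional. -/
def WEFunctional (D : DG) : Prop :=
  (∀ e, D.isWEdge e → D.funcWEdge e) ∧ (∀ e, D.isEEdge e → D.funcEEdge e)

/-- Semi-adjacency: `(a,b)` or `(b,a)` is an edge. -/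
def semiAdj (D : DG) (a b : ℕ) : Prop := (a, b) ∈ D.edges ∨ (b, a) ∈ D.edges

/-- A semipath: a nonempty sequence of mutually distinct vertices in which any
two consecutive vertices are semi-adjacent. -/
def IsSemipath (D : DG) (l : List ℕ) : Prop :=
  l ≠ [] ∧ (∀ a ∈ l, a ∈ D.verts) ∧ l.Nodup ∧ l.Chain' D.semiAdj

/-- A path: a nonempty sequence of mutually distinct vertices in which
`(a_i, a_{i+1})` is an edge for consecutive vertices. -/
def IsPath (D : DG) (l : List ℕ) : Prop :=
  l ≠ [] ∧ (∀ a ∈ l, a ∈ D.verts) ∧ l.Nodup ∧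
    l.Chain' (fun a b => (a, b) ∈ D.edges)

/-- A semicycle: a sequence `a_1, ..., a_n` of vertices with `n ≥ 4`,
`a_1 = a_n`, `a_1, ..., a_{n-1}` mutually distinct, and consecutive vertices
semi-adjacent. -/
def IsSemicycle (D : DG) (l : List ℕ) : Prop :=
  4 ≤ l.length ∧ (∀ a ∈ l, a ∈ D.verts) ∧ l.head? = l.getLast? ∧
  l.dropLast.Nodup ∧ l.Chain' D.semiAdj

/-- `D` is weakly connected: every two vertices are joined by a semipath. -/
def WeaklyConnected (D : DG) : Prop :=
  ∀ a ∈ D.verts, ∀ b ∈ D.verts,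
    ∃ l, D.IsSemipath l ∧ l.head? = some a ∧ l.getLast? = some b

/-- `D` is asemicyclic: it has no semicycles. -/
def Asemicyclic (D : DG) : Prop := ∀ l, ¬ D.IsSemicycle l

/-- The cut `D_W[e_W - e_E]D_E`:
`(D_W - {e_W}) ∪ (D_E - {e_E}) ∪ {(e_W.1, e_E.2)}` on the union of the vertex
sets with `e_W.2` and `e_E.1` omitted. -/
def cut (DW DE : DG) (eW eE : ℕ × ℕ) : DG where
  verts := (DW.verts ∪ DE.verts) \ {eW.2, eE.1}
  edges := insert (eW.1, eE.2) ((DW.edges.erase eW) ∪ (DE.edges.erase eE))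

end DG

/-- The type of assignments of four distinguished edges `NW, SW, NE, SE`. -/
abbrev DistE : Type := YDir → XDir → ℕ × ℕ

/-- The type of labellings assigning to (inner) vertices four edges. -/
abbrev Lab : Type := ℕ → YDir → XDir → ℕ × ℕ

/-- `⟨D, ε⟩` is a basic K-graph: `D` is an oriented graph with a single inner
vertex `b`, all edges begin or end in `b`, every other vertex is joined to `b`
by an edge, there is at least one edge ending in `b` and one beginning in `b`,
the distinguished edges `ε Y W` end in `b` and `ε Y E` begin in `b`, and
(XYB): if there are at least two `X`-edges then `NX ≠ SX`. -/
def IsBasicK (D : DG) (ε : DistE) : Prop :=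
  D.IsOriented ∧
  ∃ b ∈ D.verts,
    (∀ e ∈ D.edges, e.1 = b ∨ e.2 = b) ∧
    (∀ v ∈ D.verts, v = b ∨ (v, b) ∈ D.edges ∨ (b, v) ∈ D.edges) ∧
    (∃ a, (a, b) ∈ D.edges) ∧ (∃ c, (b, c) ∈ D.edges) ∧
    (∀ Y : YDir, ε Y XDir.W ∈ D.edges ∧ (ε Y XDir.W).2 = b ∧
      ε Y XDir.E ∈ D.edges ∧ (ε Y XDir.E).1 = b) ∧
    (2 ≤ (D.edges.filter (fun e => e.2 = b)).card →
      ε YDir.N XDir.W ≠ ε YDir.S XDir.W) ∧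
    (2 ≤ (D.edges.filter (fun e => e.1 = b)).card →
      ε YDir.N XDir.E ≠ ε YDir.S XDir.E)

/-- `⟨D, ε⟩` is a basic Q-graph: as a basic K-graph but with no requirement
(XYB) on the distinguished edges. -/
def IsBasicQ (D : DG) (ε : DistE) : Prop :=
  D.IsOriented ∧
  ∃ b ∈ D.verts,
    (∀ e ∈ D.edges, e.1 = b ∨ e.2 = b) ∧
    (∀ v ∈ D.verts, v = b ∨ (v, b) ∈ D.edges ∨ (b, v) ∈ D.edges) ∧
    (∃ a, (a, b) ∈ D.edges) ∧ (∃ c, (b, c) ∈ D.edges) ∧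
    (∀ Y : YDir, ε Y XDir.W ∈ D.edges ∧ (ε Y XDir.W).2 = b ∧
      ε Y XDir.E ∈ D.edges ∧ (ε Y XDir.E).1 = b)

/-- Finite binary trees whose nodes carry an oriented graph, four
distinguished edges, and (at internal nodes) the two cut edges. -/
inductive CTree : Type
  | leaf (D : DG) (ε : DistE)
  | node (D : DG) (ε : DistE) (eW eE : ℕ × ℕ) (l r : CTree)

namespace CTree

/-- The graph at the root of the tree. -/
def rootGraph : CTree → DG
  | .leaf D _ => D
  | .node D _ _ _ _ _ => D

/-- The distinguished edges at the root of the tree. -/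
def dist : CTree → DistE
  | .leaf _ ε => ε
  | .node _ ε _ _ _ _ => ε

/-- The list of graphs-with-distinguished-edges at the leaves of the tree
(the basic K-graphs determining the leaves of a construction). -/
def leaves : CTree → List (DG × DistE)
  | .leaf D ε => [(D, ε)]
  | .node _ _ _ _ l r => l.leaves ++ r.leaves

end CTree

/-- The tree `G_W[e_W - e_E]G_E`, whose root graph is the cut of the root
graphs and whose distinguished edges are given by (XYD). -/
def mkNode (GW GE : CTree) (eW eE : ℕ × ℕ) : CTree :=
  .node (DG.cut GW.rootGraph GE.rootGraph eW eE)
    (fun Y X =>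
      match X with
      | .W => if eE = GE.dist Y XDir.W then GW.dist Y XDir.W else GE.dist Y XDir.W
      | .E => if eW = GW.dist Y XDir.E then GE.dist Y XDir.E else GW.dist Y XDir.E)
    eW eE GW GE

/-- The inductive notion of construction (of a global K-graph). -/
inductive IsConstruction : CTree → Prop
  | leaf (D : DG) (ε : DistE) (h : IsBasicK D ε) : IsConstruction (.leaf D ε)
  | node (D : DG) (ε : DistE) (eW eE : ℕ × ℕ) (GW GE : CTree)
      (hW : IsConstruction GW) (hE : IsConstruction GE)
      (hdisj : Disjoint GW.rootGraph.verts GE.rootGraph.verts)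
      (heW : GW.rootGraph.funcEEdge eW)
      (heE : GE.rootGraph.funcWEdge eE)
      (hD : D = DG.cut GW.rootGraph GE.rootGraph eW eE)
      (hXYC : ∀ Y : YDir, eW = GW.dist Y XDir.E ∨ eE = GE.dist Y XDir.W)
      (hεW : ∀ Y : YDir, ε Y XDir.W =
        if eE = GE.dist Y XDir.W then GW.dist Y XDir.W else GE.dist Y XDir.W)
      (hεE : ∀ Y : YDir, ε Y XDir.E =
        if eW = GW.dist Y XDir.E then GE.dist Y XDir.E else GW.dist Y XDir.E) :
      IsConstruction (.node D ε eW eE GW GE)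

/-- The inductive notion of construction of a global Q-graph: as
`IsConstruction` but with basic Q-graphs at the leaves. -/
inductive IsConstructionQ : CTree → Prop
  | leaf (D : DG) (ε : DistE) (h : IsBasicQ D ε) : IsConstructionQ (.leaf D ε)
  | node (D : DG) (ε : DistE) (eW eE : ℕ × ℕ) (GW GE : CTree)
      (hW : IsConstructionQ GW) (hE : IsConstructionQ GE)
      (hdisj : Disjoint GW.rootGraph.verts GE.rootGraph.verts)
      (heW : GW.rootGraph.funcEEdge eW)
      (heE : GE.rootGraph.funcWEdge eE)
      (hD : D = DG.cut GW.rootGraph GE.rootGraph eW eE)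
      (hXYC : ∀ Y : YDir, eW = GW.dist Y XDir.E ∨ eE = GE.dist Y XDir.W)
      (hεW : ∀ Y : YDir, ε Y XDir.W =
        if eE = GE.dist Y XDir.W then GW.dist Y XDir.W else GE.dist Y XDir.W)
      (hεE : ∀ Y : YDir, ε Y XDir.E =
        if eW = GW.dist Y XDir.E then GE.dist Y XDir.E else GW.dist Y XDir.E) :
      IsConstructionQ (.node D ε eW eE GW GE)

/-- ρ-equivalence of constructions: the least equivalence relation containing
ρ1, ρ2, ρ3 and closed under congruence with respect to cuts. -/
inductive RhoEquiv : CTree → CTree → Prop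
  | rho1 (P Q R : CTree) (eW eE fW fE : ℕ × ℕ)
      (hP : IsConstruction P) (hQ : IsConstruction Q) (hR : IsConstruction R)
      (heW : P.rootGraph.isEEdge eW) (hfW : Q.rootGraph.isEEdge fW)
      (heE : Q.rootGraph.isWEdge eE) (hfE : R.rootGraph.isWEdge fE)
      (h1 : IsConstruction (mkNode (mkNode P Q eW eE) R fW fE))
      (h2 : IsConstruction (mkNode P (mkNode Q R fW fE) eW eE)) :
      RhoEquiv (mkNode (mkNode P Q eW eE) R fW fE)
               (mkNode P (mkNode Q R fW fE) eW eE)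
  | rho2 (P Q R : CTree) (eW eE fW fE : ℕ × ℕ)
      (hP : IsConstruction P) (hQ : IsConstruction Q) (hR : IsConstruction R)
      (heW : P.rootGraph.isEEdge eW) (hfW : P.rootGraph.isEEdge fW)
      (hne : eW ≠ fW)
      (heE : Q.rootGraph.isWEdge eE) (hfE : R.rootGraph.isWEdge fE)
      (h1 : IsConstruction (mkNode (mkNode P Q eW eE) R fW fE))
      (h2 : IsConstruction (mkNode (mkNode P R fW fE) Q eW eE)) :
      RhoEquiv (mkNode (mkNode P Q eW eE) R fW fE)
               (mkNode (mkNode P R fW fE) Q eW eE)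
  | rho3 (P Q R : CTree) (eW eE fW fE : ℕ × ℕ)
      (hP : IsConstruction P) (hQ : IsConstruction Q) (hR : IsConstruction R)
      (heE : P.rootGraph.isWEdge eE) (hfE : P.rootGraph.isWEdge fE)
      (hne : eE ≠ fE)
      (heW : Q.rootGraph.isEEdge eW) (hfW : R.rootGraph.isEEdge fW)
      (h1 : IsConstruction (mkNode R (mkNode Q P eW eE) fW fE))
      (h2 : IsConstruction (mkNode Q (mkNode R P fW fE) eW eE)) :
      RhoEquiv (mkNode R (mkNode Q P eW eE) fW fE)
               (mkNode Q (mkNode R P fW fE) eW eE)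
  | congr (G1 G2 H1 H2 : CTree) (eW eE : ℕ × ℕ)
      (h12 : RhoEquiv G1 G2) (h34 : RhoEquiv H1 H2)
      (hc1 : IsConstruction (mkNode G1 H1 eW eE))
      (hc2 : IsConstruction (mkNode G2 H2 eW eE)) :
      RhoEquiv (mkNode G1 H1 eW eE) (mkNode G2 H2 eW eE)
  | refl (G : CTree) (h : IsConstruction G) : RhoEquiv G G
  | symm {G H : CTree} (h : RhoEquiv G H) : RhoEquiv H G
  | trans {G H K : CTree} (h1 : RhoEquiv G H) (h2 : RhoEquiv H K) :
      RhoEquiv G K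

/-- The class `[G]`: all constructions with the same root graph as `G` whose
leaves are determined by the same basic K-graphs as those of `G`. -/
def classOf (G : CTree) : Set CTree :=
  {H | IsConstruction H ∧ H.rootGraph = G.rootGraph ∧
    ∀ p : DG × DistE, p ∈ H.leaves ↔ p ∈ G.leaves}

/-- Renaming the vertices of a digraph along a function. -/
def DG.rename (f : ℕ → ℕ) (D : DG) : DG where
  verts := D.verts.image f
  edges := D.edges.image (fun e => (f e.1, f e.2))

/-- Renaming the vertices throughout a tree. -/
def CTree.rename (f : ℕ → ℕ) : CTree → CTree
  | .leaf D ε => .leaf (DG.rename f D) (fun Y X => (f (ε Y X).1, f (ε Y X).2))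
  | .node D ε eW eE l r =>
      .node (DG.rename f D) (fun Y X => (f (ε Y X).1, f (ε Y X).2))
        (f eW.1, f eW.2) (f eE.1, f eE.2) (l.rename f) (r.rename f)

/-- σ-equivalence: `H` is obtained from `G` by a bijective renaming of
vertices that fixes the root vertices (so only secondary vertices may be
renamed). -/
def SigmaEquiv (G H : CTree) : Prop :=
  ∃ f : ℕ ≃ ℕ, (∀ v ∈ G.rootGraph.verts, f v = v) ∧ H = G.rename f

/-- The global compass graph `‖G‖`: all constructions σ-equivalent to a
construction in `[G]`. -/
def normClass (G : CTree) : Set CTree :=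
  {H | ∃ K ∈ classOf G, SigmaEquiv K H}

/-- The labelling `L` of `λ(G) = ⟨D, L⟩`, defined by induction on `G`: at a
leaf given by a basic K-graph with inner vertex `b`, `YX(b) = YX(B)`; at a
node, the value is inherited from the appropriate subtree unless it is one of
the two cut edges, in which case it is the new edge introduced by the cut. -/
def lamG : CTree → Lab
  | .leaf _ ε => fun _ => ε
  | .node _ _ eW eE l r => fun a Y X =>
      let v := if a ∈ l.rootGraph.verts then lamG l a Y X else lamG r a Y X
      if v = eW ∨ v = eE then (eW.1, eE.2) else v

/-- `L` assigns to every inner vertex `a` edges `L a Y W` ending in `a` and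
edges `L a Y E` beginning in `a`. -/
def ProperLab (D : DG) (L : Lab) : Prop :=
  ∀ a, D.isInner a → ∀ Y : YDir,
    L a Y XDir.W ∈ D.edges ∧ (L a Y XDir.W).2 = a ∧
    L a Y XDir.E ∈ D.edges ∧ (L a Y XDir.E).1 = a

/-- `⟨D, L⟩` separates `N` from `S`. -/
def SeparatesNS (D : DG) (L : Lab) : Prop :=
  ∀ a, D.isInner a →
    (2 ≤ (D.edges.filter (fun e => e.2 = a)).card →
      L a YDir.N XDir.W ≠ L a YDir.S XDir.W) ∧
    (2 ≤ (D.edges.filter (fun e => e.1 = a)).card →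
      L a YDir.N XDir.E ≠ L a YDir.S XDir.E)

/-- A list `a_1, ..., a_n` is `Y`-decent in `⟨D, L⟩`: `n = 1`, or
`YE(a_1) = (a_1, a_2)`, or `YW(a_n) = (a_{n-1}, a_n)`. -/
def Ydecent (L : Lab) (Y : YDir) (l : List ℕ) : Prop :=
  ∀ a b t, l = a :: b :: t →
    (L a Y XDir.E = (a, b) ∨
      ∃ c d t', l.reverse = d :: c :: t' ∧ L d Y XDir.W = (c, d))

/-- `⟨D, L⟩` is a local compass graph. -/
def IsLocalCompass (D : DG) (L : Lab) : Prop :=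
  D.IsOriented ∧ ProperLab D L ∧
  D.WeaklyConnected ∧ D.Asemicyclic ∧ D.WEFunctional ∧ (∃ a, D.isInner a) ∧
  SeparatesNS D L ∧
  (∀ l, D.IsPath l → Ydecent L YDir.N l ∧ Ydecent L YDir.S l)

/-- A path (list) covers an edge `g` when `g` is a pair of consecutive
vertices of the list. -/
def covers (l : List ℕ) (g : ℕ × ℕ) : Prop := g ∈ l.zip l.tail

/-- A `YX`-edge in `⟨D, L⟩`. -/
def YXedge (D : DG) (L : Lab) (Y : YDir) : XDir → (ℕ × ℕ) → Prop
  | .W, g => g ∈ D.edges ∧ (L g.2 Y XDir.W = g ∨ D.isEEdge g)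
  | .E, g => g ∈ D.edges ∧ (L g.1 Y XDir.E = g ∨ D.isWEdge g)

/-- A proper semipath: a semipath such that neither it nor its reverse is a
path. -/
def ProperSemipath (D : DG) (l : List ℕ) : Prop :=
  D.IsSemipath l ∧ ¬ D.IsPath l ∧ ¬ D.IsPath l.reverse

/-- A transversal edge `(a,b)`: there is a proper semipath beginning with
`a, b` and a proper semipath beginning with `b, a`. -/
def Transversal (D : DG) (e : ℕ × ℕ) : Prop :=
  e ∈ D.edges ∧
  (∃ t, ProperSemipath D (e.1 :: e.2 :: t)) ∧
  (∃ t, ProperSemipath D (e.2 :: e.1 :: t))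

/-- The edge of `D` that connects two semi-adjacent vertices `a` and `b`. -/
def connEdge (D : DG) (a b : ℕ) : ℕ × ℕ :=
  if (a, b) ∈ D.edges then (a, b) else (b, a)

/-- The connecting edges of a list: the edges connecting its consecutive
vertices. -/
def connEdges (D : DG) (l : List ℕ) (e : ℕ × ℕ) : Prop :=
  ∃ p ∈ l.zip l.tail, e = connEdge D p.1 p.2

/-- A bifurcation: three distinct edges with a common vertex. -/
def Bifurcation (D : DG) (e1 e2 e3 : ℕ × ℕ) : Prop :=
  e1 ∈ D.edges ∧ e2 ∈ D.edges ∧ e3 ∈ D.edges ∧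
  e1 ≠ e2 ∧ e1 ≠ e3 ∧ e2 ≠ e3 ∧
  ∃ v, (v = e1.1 ∨ v = e1.2) ∧ (v = e2.1 ∨ v = e2.2) ∧ (v = e3.1 ∨ v = e3.2)

/-- A K-graph: a weakly connected, asemicyclic, `W`-`E`-functional oriented
graph with an inner vertex in which no bifurcation is transversal. -/
def IsKGraph (D : DG) : Prop :=
  D.IsOriented ∧ D.WeaklyConnected ∧ D.Asemicyclic ∧ D.WEFunctional ∧
  (∃ a, D.isInner a) ∧
  ∀ e1 e2 e3, Bifurcation D e1 e2 e3 →
    ¬ (Transversal D e1 ∧ Transversal D e2 ∧ Transversal D e3)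

/-- A Q-graph: a weakly connected, asemicyclic, `W`-`E`-functional oriented
graph with an inner vertex. -/
def IsQGraph (D : DG) : Prop :=
  D.IsOriented ∧ D.WeaklyConnected ∧ D.Asemicyclic ∧ D.WEFunctional ∧
  ∃ a, D.isInner a


section Helpers

/-- From a chain (walk), extract a nodup chain with the same endpoints. -/
lemma chain_to_nodup {α : Type*} (R : α → α → Prop) :
    ∀ l : List α, l ≠ [] → l.Chain' R →
    ∃ m : List α, m ≠ [] ∧ m.Chain' R ∧ m.Nodup ∧ (∀ x ∈ m, x ∈ l) ∧
      m.head? = l.head? ∧ m.getLast? = l.getLast? := by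
  intro l
  induction l with
  | nil => intro h; exact absurd rfl h
  | cons x t ih =>
    intro _ hc
    cases t with
    | nil => exact ⟨[x], by simp, List.isChain_singleton _, by simp, by simp, rfl, rfl⟩
    | cons y t' =>
      have hc' : (y :: t').Chain' R := hc.tail
      have hRxy : R x y := (List.isChain_cons_cons.mp hc).1
      obtain ⟨m, hm0, hmc, hmn, hmem, hmh, hml⟩ := ih (by simp) hc'
      by_cases hx : x ∈ m
      · obtain ⟨m1, m2, hm12⟩ := List.append_of_mem hx
        refine ⟨x :: m2, by simp, ?_, ?_, ?_, by simp, ?_⟩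
        · exact hmc.suffix ⟨m1, hm12.symm⟩
        · exact (List.IsSuffix.sublist ⟨m1, hm12.symm⟩).nodup hmn
        · intro z hz
          have : z ∈ m := (List.IsSuffix.sublist ⟨m1, hm12.symm⟩).mem hz
          exact List.mem_cons_of_mem _ (hmem z this)
        · have h1 : (x :: m2).getLast? = m.getLast? := by
            rw [hm12, List.getLast?_append,
              List.getLast?_eq_getLast (l := x :: m2) (by simp)]
            rfl
          rw [h1, hml, List.getLast?_cons_cons]
      · obtain ⟨m0, mt, rfl⟩ := List.exists_cons_of_ne_nil hm0
        refine ⟨x :: m0 :: mt, by simp, ?_, ?_, ?_, by simp, ?_⟩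
        · refine List.isChain_cons.mpr ⟨?_, hmc⟩
          intro z hz
          rw [hmh] at hz
          simp at hz
          rwa [hz] at hRxy
        · exact List.nodup_cons.mpr ⟨hx, hmn⟩
        · intro z hz
          rcases List.mem_cons.mp hz with h | h
          · simp [h]
          · exact List.mem_cons_of_mem _ (hmem z h)
        · rw [List.getLast?_cons_cons, hml, List.getLast?_cons_cons]

/-- From reflexive-transitive closure, get a chain (walk). -/
lemma rtg_chain {α : Type*} {R : α → α → Prop} {u v : α}
    (h : Relation.ReflTransGen R u v) :
    ∃ l : List α, l ≠ [] ∧ l.Chain' R ∧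
      (∀ x ∈ l, x = u ∨ ∃ y, R y x) ∧ l.head? = some u ∧ l.getLast? = some v := by
  induction h with
  | refl => exact ⟨[u], by simp, List.isChain_singleton _, by simp, rfl, rfl⟩
  | tail _ hbc ih =>
    rename_i b c _
    obtain ⟨l, hl0, hlc, hmem, hlh, hll⟩ := ih
    refine ⟨l ++ [c], by simp, ?_, ?_, ?_, ?_⟩
    · refine List.isChain_append.mpr ⟨hlc, List.isChain_singleton _, ?_⟩
      intro x hx y hy
      rw [hll] at hx
      simp at hx hy
      rw [← hx, ← hy]; exact hbc
    · intro x hx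
      rcases List.mem_append.mp hx with h | h
      · exact hmem x h
      · simp at h
        exact Or.inr ⟨b, h ▸ hbc⟩
    · rw [List.head?_append, hlh]; rfl
    · rw [List.getLast?_append]; rfl

/-- From a chain, get reflexive-transitive closure of endpoints. -/
lemma rtg_of_chain {α : Type*} {R : α → α → Prop} :
    ∀ l : List α, l.Chain' R → ∀ u v, l.head? = some u → l.getLast? = some v →
      Relation.ReflTransGen R u v := by
  intro l
  induction l with
  | nil => intro _ u v h; simp at h
  | cons x t ih =>
    intro hc u v hh hl
    simp at hh
    subst hh
    cases t with
    | nil =>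
      simp at hl
      subst hl
      exact Relation.ReflTransGen.refl
    | cons y t' =>
      have hRxy : R x y := (List.isChain_cons_cons.mp hc).1
      rw [List.getLast?_cons_cons] at hl
      exact Relation.ReflTransGen.head hRxy (ih hc.tail y v rfl hl)

/-- A vertex with a unique neighbour is not on a nodup chain that neither
begins nor ends in it. -/
lemma not_mem_of_unique_nbr {α : Type*} {R : α → α → Prop}
    (hsym : ∀ x y, R x y → R y x) (w u : α) (hu : ∀ x, R w x → x = u) :
    ∀ l : List α, l.Nodup → l.Chain' R → l.head? ≠ some w →
      l.getLast? ≠ some w → w ∉ l := by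
  intro l
  induction l with
  | nil => simp
  | cons x t ih =>
    intro hnd hc hh hl hmem
    have hxw : x ≠ w := by simpa using hh
    rcases List.mem_cons.mp hmem with h | hwt
    · exact hxw h.symm
    cases t with
    | nil => simp at hwt
    | cons y t' =>
      have hRxy : R x y := (List.isChain_cons_cons.mp hc).1
      by_cases hyw : y = w
      · subst hyw
        have hxu : x = u := hu x (hsym x y hRxy)
        cases t' with
        | nil =>
          apply hl
          simp
        | cons z t'' =>
          have hRyz : R y z := (List.isChain_cons_cons.mp hc.tail).1
          have hzu : z = u := hu z hRyz
          have : x ∈ y :: z :: t'' := by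
            rw [hxu, ← hzu]; simp
          exact (List.nodup_cons.mp hnd).1 this
      · refine ih (List.nodup_cons.mp hnd).2 hc.tail (by simpa using hyw) ?_ hwt
        rwa [List.getLast?_cons_cons] at hl

/-- Constancy along a segment with no side-changes. -/
lemma const_seg {α : Type*} (s : α → Bool) (l : List α) :
    ∀ d p, (h : p + d < l.length) →
    (∀ k, p ≤ k → k < p + d → (hk : k + 1 < l.length) →
      s (l[k]'(by omega)) = s (l[k+1]'hk)) →
    s (l[p]'(by omega)) = s (l[p+d]'h) := by
  intro d
  induction d with
  | zero => intro p h _; rfl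
  | succ n ih =>
    intro p h hstep
    have h1 : p + n < l.length := by omega
    have h2 := ih p h1 (fun k hk1 hk2 hk3 => hstep k hk1 (by omega) hk3)
    rw [h2]
    exact hstep (p+n) (by omega) (by omega) (by omega)

lemma const_seg' {α : Type*} (s : α → Bool) (l : List α) (i j : ℕ) (hij : i ≤ j)
    (hj : j < l.length)
    (h : ∀ k, i ≤ k → k < j → (hk : k + 1 < l.length) →
      s (l[k]'(by omega)) = s (l[k+1]'hk)) :
    s (l[i]'(by omega)) = s (l[j]'hj) := by
  obtain ⟨d, rfl⟩ := Nat.exists_eq_add_of_le hij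
  exact const_seg s l d i hj (fun k h1 h2 h3 => h k h1 h2 h3)

lemma chain'_idx {α : Type*} {R : α → α → Prop} {l : List α} :
    l.Chain' R ↔ ∀ i, (h : i + 1 < l.length) → R (l[i]'(by omega)) (l[i+1]'h) := by
  rw [show List.Chain' R l ↔ List.IsChain R l from Iff.rfl, List.isChain_iff_getElem]

lemma getElem_congr_idx {α : Type*} {l : List α} {i j : ℕ} (h : i = j)
    (hi : i < l.length) : l[i]'hi = l[j]'(h ▸ hi) := by
  subst h; rfl

end Helpers

section DGHelpers

lemma semiAdj_symm (D : DG) : ∀ x y, D.semiAdj x y → D.semiAdj y x := by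
  intro x y h; exact h.symm

lemma semiAdj_mem_verts {D : DG} (hor : D.IsOriented) {x y : ℕ}
    (h : D.semiAdj x y) : x ∈ D.verts ∧ y ∈ D.verts := by
  rcases h with h | h
  · exact ⟨(hor.1 _ h).1, (hor.1 _ h).2⟩
  · exact ⟨(hor.1 _ h).2, (hor.1 _ h).1⟩

lemma semiAdj_ne {D : DG} (hor : D.IsOriented) {x y : ℕ}
    (h : D.semiAdj x y) : x ≠ y := by
  rcases h with h | h
  · exact hor.2.1 _ h
  · exact (hor.2.1 _ h).symm

lemma weaklyConnected_of_rtg {D : DG} (hor : D.IsOriented)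
    (h : ∀ a ∈ D.verts, ∀ b ∈ D.verts, Relation.ReflTransGen D.semiAdj a b) :
    D.WeaklyConnected := by
  intro a ha b hb
  obtain ⟨l, hl0, hlc, hmem, hlh, hll⟩ := rtg_chain (h a ha b hb)
  obtain ⟨m, hm0, hmc, hmn, hmm, hmh, hml⟩ := chain_to_nodup _ l hl0 hlc
  refine ⟨m, ⟨hm0, ?_, hmn, hmc⟩, by rw [hmh, hlh], by rw [hml, hll]⟩
  intro x hx
  rcases hmem x (hmm x hx) with rfl | ⟨y, hy⟩
  · exact ha
  · exact (semiAdj_mem_verts hor hy).2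

lemma mem_cut_edges {DW DE : DG} {eW eE e : ℕ × ℕ} :
    e ∈ (DG.cut DW DE eW eE).edges ↔
      e = (eW.1, eE.2) ∨ (e ∈ DW.edges ∧ e ≠ eW) ∨ (e ∈ DE.edges ∧ e ≠ eE) := by
  simp only [DG.cut, Finset.mem_insert, Finset.mem_union, Finset.mem_erase]
  tauto

lemma mem_cut_verts {DW DE : DG} {eW eE : ℕ × ℕ} {v : ℕ} :
    v ∈ (DG.cut DW DE eW eE).verts ↔
      (v ∈ DW.verts ∨ v ∈ DE.verts) ∧ v ≠ eW.2 ∧ v ≠ eE.1 := by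
  simp only [DG.cut, Finset.mem_sdiff, Finset.mem_union, Finset.mem_insert,
    Finset.mem_singleton]
  tauto

end DGHelpers


section BaseCase

lemma head_getLast_eq {l : List ℕ} (hl : l ≠ []) (h : l.head? = l.getLast?) :
    l[0]'(List.length_pos_iff.mpr hl) = l[l.length - 1]'(by
      have := List.length_pos_iff.mpr hl; omega) := by
  have h1 : l.head? = some (l[0]'(List.length_pos_iff.mpr hl)) := by
    rw [List.head?_eq_getElem?, List.getElem?_eq_getElem]
  have h2 : l.getLast? = some (l[l.length - 1]'(by
      have := List.length_pos_iff.mpr hl; omega)) := by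
    rw [List.getLast?_eq_getElem?, List.getElem?_eq_getElem]
  rw [h1, h2] at h
  exact Option.some_injective _ h

lemma nodup_dropLast_idx {l : List ℕ} (h : l.dropLast.Nodup) {i j : ℕ}
    (hi : i < l.length - 1) (hj : j < l.length - 1)
    (hij : l[i]'(by omega) = l[j]'(by omega)) : i = j := by
  have hi' : i < l.dropLast.length := by simp; omega
  have hj' : j < l.dropLast.length := by simp; omega
  have : l.dropLast[i]'hi' = l.dropLast[j]'hj' := by
    rw [List.getElem_dropLast, List.getElem_dropLast]
    exact hij
  exact (h.getElem_inj_iff).mp this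

lemma basicK_props {D : DG} {ε : DistE} (h : IsBasicK D ε) :
    D.IsOriented ∧ D.WeaklyConnected ∧ D.Asemicyclic ∧ D.WEFunctional ∧
      ∃ a, D.isInner a := by
  obtain ⟨hor, b, hb, hedge, hjoin, ⟨a0, ha0⟩, ⟨c0, hc0⟩, -, -, -⟩ := h
  refine ⟨hor, ?_, ?_, ?_, ⟨b, hb, ⟨a0, ha0⟩, ⟨c0, hc0⟩⟩⟩
  · -- weakly connected
    apply weaklyConnected_of_rtg hor
    have hstep : ∀ v ∈ D.verts, Relation.ReflTransGen D.semiAdj v b := by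
      intro v hv
      rcases hjoin v hv with rfl | h | h
      · exact Relation.ReflTransGen.refl
      · exact Relation.ReflTransGen.single (Or.inl h)
      · exact Relation.ReflTransGen.single (Or.inr h)
    have hsymm : ∀ {x y}, Relation.ReflTransGen D.semiAdj x y →
        Relation.ReflTransGen D.semiAdj y x := fun h =>
      (@Relation.ReflTransGen.stdSymm _ _ ⟨fun x y (h : D.semiAdj x y) => h.symm⟩).symm _ _ h
    intro x hx y hy
    exact (hstep x hx).trans (hsymm (hstep y hy))
  · -- asemicyclic
    rintro l ⟨hlen, hmem, hhl, hnd, hchain⟩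
    have hl0 : l ≠ [] := by
      intro h; rw [h] at hlen; simp at hlen
    have hn := hlen
    have hpair : ∀ i, (hi : i + 1 < l.length) →
        l[i]'(by omega) = b ∨ l[i+1]'hi = b := by
      intro i hi
      rcases chain'_idx.mp hchain i hi with h | h
      · rcases hedge _ h with h' | h' <;> [exact Or.inl h'; exact Or.inr h']
      · rcases hedge _ h with h' | h' <;> [exact Or.inr h'; exact Or.inl h']
    have hne : ∀ i, (hi : i + 1 < l.length) → l[i]'(by omega) ≠ l[i+1]'hi :=
      fun i hi => semiAdj_ne hor (chain'_idx.mp hchain i hi)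
    have h0 := head_getLast_eq hl0 hhl
    by_cases h1 : l[1]'(by omega) = b
    · have h0b : l[0]'(by omega) ≠ b := fun hh =>
        hne 0 (by omega) (hh.trans h1.symm)
      have h2b : l[2]'(by omega) ≠ b := fun hh =>
        hne 1 (by omega) (h1.trans hh.symm)
      have h3 : l[3]'(by omega) = b := by
        rcases hpair 2 (by omega) with h | h
        · exact absurd h h2b
        · exact h
      by_cases h4 : (4 : ℕ) < l.length
      · have := nodup_dropLast_idx hnd (i := 1) (j := 3) (by omega) (by omega)
          (h1.trans h3.symm)
        omega
      · -- l.length = 4, so index 3 = length - 1, l[3] = l[0]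
        have hlen4 : l.length = 4 := by omega
        apply h0b
        simp only [hlen4] at h0
        exact h0.trans h3
    · have h0' : l[0]'(by omega) = b := by
        rcases hpair 0 (by omega) with h | h
        · exact h
        · exact absurd h h1
      have h2 : l[2]'(by omega) = b := by
        rcases hpair 1 (by omega) with h | h
        · exact absurd h h1
        · exact h
      have := nodup_dropLast_idx hnd (i := 0) (j := 2) (by omega) (by omega)
        (h0'.trans h2.symm)
      omega
  · -- WE-functional
    constructor
    · rintro ⟨x, y⟩ ⟨hxy, hxv, hxnin⟩
      refine ⟨⟨hxy, hxv, hxnin⟩, ?_⟩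
      have hxb : x ≠ b := fun hh => hxnin a0 (by rw [hh]; exact ha0)
      intro z hz
      rcases hedge _ hz with h' | h'
      · exact absurd h' hxb
      · have hy : y = b := by
          rcases hedge _ hxy with h'' | h''
          · exact absurd h'' hxb
          · exact h''
        simp at h' ⊢
        rw [h', hy]
    · rintro ⟨y, x⟩ ⟨hxy, hxv, hxnin⟩
      refine ⟨⟨hxy, hxv, hxnin⟩, ?_⟩
      have hxb : x ≠ b := fun hh => hxnin c0 (by rw [hh]; exact hc0)
      intro z hz
      rcases hedge _ hz with h' | h'
      · have hy : y = b := by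
          rcases hedge _ hxy with h'' | h''
          · exact h''
          · exact absurd h'' hxb
        simp at h' ⊢
        rw [h', hy]
      · exact absurd h' hxb

end BaseCase


section CutCase

lemma cut_props {DW DE : DG} {eW eE : ℕ × ℕ}
    (horW : DW.IsOriented) (horE : DE.IsOriented)
    (hdisj : Disjoint DW.verts DE.verts)
    (heW : DW.funcEEdge eW) (heE : DE.funcWEdge eE)
    (hwcW : DW.WeaklyConnected) (hwcE : DE.WeaklyConnected)
    (hacW : DW.Asemicyclic) (hacE : DE.Asemicyclic)
    (hfW : DW.WEFunctional) (hfE : DE.WEFunctional)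
    (hinW : ∃ a, DW.isInner a) :
    (DG.cut DW DE eW eE).IsOriented ∧ (DG.cut DW DE eW eE).WeaklyConnected ∧
    (DG.cut DW DE eW eE).Asemicyclic ∧ (DG.cut DW DE eW eE).WEFunctional ∧
    ∃ a, (DG.cut DW DE eW eE).isInner a := by
  obtain ⟨A, B⟩ := eW
  obtain ⟨C, Dd⟩ := eE
  set D' := DG.cut DW DE (A, B) (C, Dd) with hD'
  have hABm : (A, B) ∈ DW.edges := heW.1.1
  have hBv : B ∈ DW.verts := heW.1.2.1
  have hBnoout : ∀ u, (B, u) ∉ DW.edges := heW.1.2.2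
  have hBin : ∀ u, (u, B) ∈ DW.edges → u = A := heW.2
  have hCDm : (C, Dd) ∈ DE.edges := heE.1.1
  have hCv : C ∈ DE.verts := heE.1.2.1
  have hCnoin : ∀ u, (u, C) ∉ DE.edges := heE.1.2.2
  have hCout : ∀ u, (C, u) ∈ DE.edges → u = Dd := heE.2
  have hAv : A ∈ DW.verts := (horW.1 _ hABm).1
  have hDv : Dd ∈ DE.verts := (horE.1 _ hCDm).2
  have hAB : A ≠ B := horW.2.1 _ hABm
  have hCD : C ≠ Dd := horE.2.1 _ hCDm
  have hWnE : ∀ x, x ∈ DW.verts → x ∉ DE.verts :=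
    fun x hx => Finset.disjoint_left.mp hdisj hx
  have hAD : A ≠ Dd := fun h => hWnE A hAv (h ▸ hDv)
  have hnotB : ∀ e ∈ DW.edges, e ≠ (A, B) → e.1 ≠ B ∧ e.2 ≠ B := by
    rintro ⟨p, q⟩ hm hne
    constructor
    · rintro rfl
      exact hBnoout q hm
    · rintro rfl
      exact hne (by rw [hBin p hm])
  have hnotC : ∀ e ∈ DE.edges, e ≠ (C, Dd) → e.1 ≠ C ∧ e.2 ≠ C := by
    rintro ⟨p, q⟩ hm hne
    constructor
    · rintro rfl
      exact hne (by rw [hCout q hm])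
    · rintro rfl
      exact hCnoin p hm
  have hADm : ((A, Dd) : ℕ × ℕ) ∈ D'.edges := mem_cut_edges.mpr (Or.inl rfl)
  have hmemW : ∀ e ∈ DW.edges, e ≠ (A, B) → e ∈ D'.edges :=
    fun e he hne => mem_cut_edges.mpr (Or.inr (Or.inl ⟨he, hne⟩))
  have hmemE : ∀ e ∈ DE.edges, e ≠ (C, Dd) → e ∈ D'.edges :=
    fun e he hne => mem_cut_edges.mpr (Or.inr (Or.inr ⟨he, hne⟩))
  have hvertW : ∀ x ∈ DW.verts, x ≠ B → x ∈ D'.verts := by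
    intro x hx hxB
    exact mem_cut_verts.mpr ⟨Or.inl hx, hxB, fun h => hWnE x hx (h ▸ hCv)⟩
  have hvertE : ∀ x ∈ DE.verts, x ≠ C → x ∈ D'.verts := by
    intro x hx hxC
    exact mem_cut_verts.mpr
      ⟨Or.inr hx, fun h => hWnE B hBv ((show x = B from h) ▸ hx), hxC⟩
  have hAv' : A ∈ D'.verts := hvertW A hAv hAB
  have hDv' : Dd ∈ D'.verts := hvertE Dd hDv (Ne.symm hCD)
  have hvcls : ∀ x ∈ D'.verts, (x ∈ DW.verts ∧ x ≠ B) ∨ (x ∈ DE.verts ∧ x ≠ C) := by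
    intro x hx
    obtain ⟨h1, h2, h3⟩ := mem_cut_verts.mp hx
    rcases h1 with h | h
    · exact Or.inl ⟨h, h2⟩
    · exact Or.inr ⟨h, h3⟩
  have horD : D'.IsOriented := by
    refine ⟨?_, ?_, ?_, ⟨A, hAv'⟩⟩
    · rintro ⟨p, q⟩ hm
      rcases mem_cut_edges.mp hm with he | ⟨he, hne⟩ | ⟨he, hne⟩
      · obtain ⟨rfl, rfl⟩ := Prod.mk.injEq .. ▸ he
        exact ⟨hAv', hDv'⟩
      · exact ⟨hvertW p (horW.1 _ he).1 (hnotB _ he hne).1,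
          hvertW q (horW.1 _ he).2 (hnotB _ he hne).2⟩
      · exact ⟨hvertE p (horE.1 _ he).1 (hnotC _ he hne).1,
          hvertE q (horE.1 _ he).2 (hnotC _ he hne).2⟩
    · rintro ⟨p, q⟩ hm
      rcases mem_cut_edges.mp hm with he | ⟨he, hne⟩ | ⟨he, hne⟩
      · obtain ⟨rfl, rfl⟩ := Prod.mk.injEq .. ▸ he
        exact hAD
      · exact horW.2.1 _ he
      · exact horE.2.1 _ he
    · intro p q h1 h2
      rcases mem_cut_edges.mp h1 with he1 | ⟨he1, hne1⟩ | ⟨he1, hne1⟩ <;>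
        rcases mem_cut_edges.mp h2 with he2 | ⟨he2, hne2⟩ | ⟨he2, hne2⟩
      · simp only [Prod.mk.injEq] at he1 he2
        exact hAD (he1.1.symm.trans he2.2)
      · simp only [Prod.mk.injEq] at he1
        exact hWnE q (horW.1 _ he2).1 (he1.2 ▸ hDv)
      · simp only [Prod.mk.injEq] at he1
        exact hWnE p (he1.1 ▸ hAv) (horE.1 _ he2).2
      · simp only [Prod.mk.injEq] at he2
        exact hWnE p (horW.1 _ he1).1 (he2.2 ▸ hDv)
      · exact horW.2.2.1 p q he1 he2
      · exact hWnE p (horW.1 _ he1).1 (horE.1 _ he2).2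
      · simp only [Prod.mk.injEq] at he2
        exact hWnE q (he2.1 ▸ hAv) (horE.1 _ he1).2
      · exact hWnE q (horW.1 _ he2).1 (horE.1 _ he1).2
      · exact horE.2.2.1 p q he1 he2
  refine ⟨horD, ?_, ?_, ?_, ?_⟩
  · -- weakly connected
    apply weaklyConnected_of_rtg horD
    have hsymm : ∀ {x y}, Relation.ReflTransGen D'.semiAdj x y →
        Relation.ReflTransGen D'.semiAdj y x := fun h =>
      (@Relation.ReflTransGen.stdSymm _ _ ⟨fun x y (h : D'.semiAdj x y) => h.symm⟩).symm _ _ h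
    have hchainW : ∀ l : List ℕ, l.Chain' DW.semiAdj → B ∉ l →
        l.Chain' D'.semiAdj := by
      intro l hc hB
      refine chain'_idx.mpr ?_
      intro i hi
      have h1 := chain'_idx.mp hc i hi
      have hxB : l[i]'(by omega) ≠ B := fun h => hB (h ▸ List.getElem_mem _)
      have hyB : l[i+1]'hi ≠ B := fun h => hB (h ▸ List.getElem_mem _)
      rcases h1 with h | h
      · exact Or.inl (hmemW _ h (fun hh => hyB (congrArg Prod.snd hh)))
      · exact Or.inr (hmemW _ h (fun hh => hxB (congrArg Prod.snd hh)))
    have hchainE : ∀ l : List ℕ, l.Chain' DE.semiAdj → C ∉ l →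
        l.Chain' D'.semiAdj := by
      intro l hc hC
      refine chain'_idx.mpr ?_
      intro i hi
      have h1 := chain'_idx.mp hc i hi
      have hxC : l[i]'(by omega) ≠ C := fun h => hC (h ▸ List.getElem_mem _)
      have hyC : l[i+1]'hi ≠ C := fun h => hC (h ▸ List.getElem_mem _)
      rcases h1 with h | h
      · exact Or.inl (hmemE _ h (fun hh => hxC (congrArg Prod.fst hh)))
      · exact Or.inr (hmemE _ h (fun hh => hyC (congrArg Prod.fst hh)))
    have hclaimW : ∀ v ∈ DW.verts, v ≠ B →
        Relation.ReflTransGen D'.semiAdj v A := by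
      intro v hv hvB
      obtain ⟨l, ⟨hl0, hlm, hln, hlc⟩, hlh, hll⟩ := hwcW v hv A hAv
      have hBl : B ∉ l := by
        refine not_mem_of_unique_nbr (semiAdj_symm DW) B A ?_ l hln hlc ?_ ?_
        · intro x hx
          rcases hx with h | h
          · exact absurd h (hBnoout x)
          · exact hBin x h
        · rw [hlh]; simpa using hvB
        · rw [hll]; simpa using hAB
      exact rtg_of_chain l (hchainW l hlc hBl) v A hlh hll
    have hclaimE : ∀ v ∈ DE.verts, v ≠ C →
        Relation.ReflTransGen D'.semiAdj Dd v := by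
      intro v hv hvC
      obtain ⟨l, ⟨hl0, hlm, hln, hlc⟩, hlh, hll⟩ := hwcE Dd hDv v hv
      have hCl : C ∉ l := by
        refine not_mem_of_unique_nbr (semiAdj_symm DE) C Dd ?_ l hln hlc ?_ ?_
        · intro x hx
          rcases hx with h | h
          · exact hCout x h
          · exact absurd h (hCnoin x)
        · rw [hlh]; simpa using (Ne.symm hCD)
        · rw [hll]; simpa using hvC
      exact rtg_of_chain l (hchainE l hlc hCl) Dd v hlh hll
    have hADrtg : Relation.ReflTransGen D'.semiAdj A Dd :=
      Relation.ReflTransGen.single (Or.inl hADm)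
    have hhub : ∀ v ∈ D'.verts, Relation.ReflTransGen D'.semiAdj A v := by
      intro v hv
      rcases hvcls v hv with ⟨h, hne⟩ | ⟨h, hne⟩
      · exact hsymm (hclaimW v h hne)
      · exact hADrtg.trans (hclaimE v h hne)
    intro x hx y hy
    exact (hsymm (hhub x hx)).trans (hhub y hy)
  · -- asemicyclic
    rintro l ⟨hlen, hmem, hhl, hnd, hchain⟩
    have hl0 : l ≠ [] := by intro h; rw [h] at hlen; simp at hlen
    set s : ℕ → Bool := fun v => decide (v ∈ DW.verts) with hs
    have hsW : ∀ v, v ∈ DW.verts → s v = true := fun v hv => by simp [hs, hv]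
    have hsE : ∀ v, v ∈ DE.verts → s v = false := by
      intro v hv
      simp only [hs, decide_eq_false_iff_not]
      exact fun hh => hWnE v hh hv
    have h0 := head_getLast_eq hl0 hhl
    have hcross : ∀ i, (hi : i + 1 < l.length) →
        s (l[i]'(by omega)) ≠ s (l[i+1]'hi) →
        (l[i]'(by omega) = A ∧ l[i+1]'hi = Dd) ∨
        (l[i]'(by omega) = Dd ∧ l[i+1]'hi = A) := by
      intro i hi hne
      rcases chain'_idx.mp hchain i hi with h | h
      · rcases mem_cut_edges.mp h with hc | ⟨hc, -⟩ | ⟨hc, -⟩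
        · exact Or.inl ⟨congrArg Prod.fst hc, congrArg Prod.snd hc⟩
        · exact absurd (by rw [hsW _ (horW.1 _ hc).1, hsW _ (horW.1 _ hc).2]) hne
        · exact absurd (by rw [hsE _ (horE.1 _ hc).1, hsE _ (horE.1 _ hc).2]) hne
      · rcases mem_cut_edges.mp h with hc | ⟨hc, -⟩ | ⟨hc, -⟩
        · exact Or.inr ⟨congrArg Prod.snd hc, congrArg Prod.fst hc⟩
        · exact absurd (by rw [hsW _ (horW.1 _ hc).2, hsW _ (horW.1 _ hc).1]) hne
        · exact absurd (by rw [hsE _ (horE.1 _ hc).2, hsE _ (horE.1 _ hc).1]) hne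
    have hndidx : ∀ i j, (hi : i < l.length - 1) → (hj : j < l.length - 1) →
        l[i]'(by omega) = l[j]'(by omega) → i = j :=
      fun i j hi hj hh => nodup_dropLast_idx hnd hi hj hh
    have htwo : ∀ i j, i < j → (hi : i + 1 < l.length) → (hj : j + 1 < l.length) →
        s (l[i]'(by omega)) ≠ s (l[i+1]'hi) →
        s (l[j]'(by omega)) ≠ s (l[j+1]'hj) → False := by
      intro i j hij hi hj hci hcj
      have h4 : 4 ≤ l.length := hlen
      rcases hcross i hi hci with ⟨hi1, hi2⟩ | ⟨hi1, hi2⟩ <;>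
        rcases hcross j hj hcj with ⟨hj1, hj2⟩ | ⟨hj1, hj2⟩
      · have := hndidx i j (by omega) (by omega) (hi1.trans hj1.symm); omega
      · have hij2 : i + 1 = j :=
          hndidx (i+1) j (by omega) (by omega) (hi2.trans hj1.symm)
        by_cases hc : j + 1 < l.length - 1
        · have := hndidx i (j+1) (by omega) (by omega) (hi1.trans hj2.symm); omega
        · have hj1' : l.length - 1 = j + 1 := by omega
          have h0A : l[0]'(by omega) = A :=
            h0.trans ((getElem_congr_idx hj1' (by omega)).trans hj2)
          have := hndidx 0 i (by omega) (by omega) (h0A.trans hi1.symm)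
          omega
      · have hij2 : i + 1 = j :=
          hndidx (i+1) j (by omega) (by omega) (hi2.trans hj1.symm)
        by_cases hc : j + 1 < l.length - 1
        · have := hndidx i (j+1) (by omega) (by omega) (hi1.trans hj2.symm); omega
        · have hj1' : l.length - 1 = j + 1 := by omega
          have h0A : l[0]'(by omega) = Dd :=
            h0.trans ((getElem_congr_idx hj1' (by omega)).trans hj2)
          have := hndidx 0 i (by omega) (by omega) (h0A.trans hi1.symm)
          omega
      · have := hndidx i j (by omega) (by omega) (hi1.trans hj1.symm); omega
    by_cases hall : ∀ k, (hk : k + 1 < l.length) →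
        s (l[k]'(by omega)) = s (l[k+1]'hk)
    · have hconst : ∀ j, (hj : j < l.length) →
          s (l[j]'hj) = s (l[0]'(by omega)) := by
        intro j hj
        exact (const_seg' s l 0 j (by omega) hj
          (fun k h1 h2 h3 => hall k h3)).symm
      by_cases hside : s (l[0]'(by omega)) = true
      · apply hacW l
        have hmW : ∀ j, (hj : j < l.length) → l[j]'hj ∈ DW.verts := by
          intro j hj
          have := (hconst j hj).trans hside
          simpa [hs] using this
        refine ⟨hlen, ?_, hhl, hnd, ?_⟩
        · intro x hx
          obtain ⟨k, hk, hkx⟩ := List.mem_iff_getElem.mp hx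
          exact hkx ▸ hmW k hk
        · refine chain'_idx.mpr ?_
          intro i hi
          have hx := hmW i (by omega)
          have hy := hmW (i+1) hi
          rcases chain'_idx.mp hchain i hi with h | h
          · rcases mem_cut_edges.mp h with hc | ⟨hc, -⟩ | ⟨hc, -⟩
            · have cc : l[i+1]'hi = Dd := congrArg Prod.snd hc
              exact absurd hDv (hWnE _ (cc ▸ hy))
            · exact Or.inl hc
            · exact absurd (horE.1 _ hc).1 (hWnE _ hx)
          · rcases mem_cut_edges.mp h with hc | ⟨hc, -⟩ | ⟨hc, -⟩
            · have cc : l[i]'(by omega) = Dd := congrArg Prod.snd hc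
              exact absurd hDv (hWnE _ (cc ▸ hx))
            · exact Or.inr hc
            · exact absurd (horE.1 _ hc).2 (hWnE _ hx)
      · have hside' : s (l[0]'(by omega)) = false := by
          revert hside
          cases s (l[0]'(by omega)) <;> simp
        apply hacE l
        have hmE : ∀ j, (hj : j < l.length) → l[j]'hj ∈ DE.verts := by
          intro j hj
          have hsf := (hconst j hj).trans hside'
          have hnW : l[j]'hj ∉ DW.verts := by
            simpa [hs] using hsf
          rcases hvcls _ (hmem _ (List.getElem_mem hj)) with ⟨h, -⟩ | ⟨h, -⟩
          · exact absurd h hnW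
          · exact h
        refine ⟨hlen, ?_, hhl, hnd, ?_⟩
        · intro x hx
          obtain ⟨k, hk, hkx⟩ := List.mem_iff_getElem.mp hx
          exact hkx ▸ hmE k hk
        · refine chain'_idx.mpr ?_
          intro i hi
          have hx := hmE i (by omega)
          have hy := hmE (i+1) hi
          rcases chain'_idx.mp hchain i hi with h | h
          · rcases mem_cut_edges.mp h with hc | ⟨hc, -⟩ | ⟨hc, -⟩
            · have cc : l[i]'(by omega) = A := congrArg Prod.fst hc
              exact absurd (cc ▸ hx) (hWnE _ hAv)
            · exact absurd (horW.1 _ hc).1 (fun hh => hWnE _ hh hx)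
            · exact Or.inl hc
          · rcases mem_cut_edges.mp h with hc | ⟨hc, -⟩ | ⟨hc, -⟩
            · have cc : l[i+1]'hi = A := congrArg Prod.fst hc
              exact absurd (cc ▸ hy) (hWnE _ hAv)
            · exact absurd (horW.1 _ hc).1 (fun hh => hWnE _ hh hy)
            · exact Or.inr hc
    · push_neg at hall
      obtain ⟨i, hi, hci⟩ := hall
      by_cases hrest : ∀ k, k ≠ i → (hk : k + 1 < l.length) →
          s (l[k]'(by omega)) = s (l[k+1]'hk)
      · have e1 : s (l[0]'(by omega)) = s (l[i]'(by omega)) :=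
          const_seg' s l 0 i (by omega) (by omega)
            (fun k h1 h2 h3 => hrest k (by omega) h3)
        have e2 : s (l[i+1]'hi) = s (l[l.length - 1]'(by omega)) :=
          const_seg' s l (i+1) (l.length - 1) (by omega) (by omega)
            (fun k h1 h2 h3 => hrest k (by omega) h3)
        have e3 : s (l[0]'(by omega)) = s (l[l.length - 1]'(by omega)) :=
          congrArg s h0
        exact hci (e1.symm.trans (e3.trans e2.symm))
      · push_neg at hrest
        obtain ⟨j, hji, hj, hcj⟩ := hrest
        rcases lt_or_gt_of_ne hji with h | h
        · exact htwo j i h hj hi hcj hci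
        · exact htwo i j h hi hj hci hcj
  · -- WE-functional
    constructor
    · rintro ⟨x, y⟩ ⟨hxy, hxv, hxnin⟩
      refine ⟨⟨hxy, hxv, hxnin⟩, ?_⟩
      intro z hz
      rcases mem_cut_edges.mp hxy with hc | ⟨hWe, hne⟩ | ⟨hEe, hne⟩
      · obtain ⟨rfl, rfl⟩ := Prod.mk.injEq .. ▸ hc
        have hAw : ∀ u, (u, x) ∉ DW.edges := fun u hu =>
          hxnin u (hmemW _ hu (fun hh => hAB (congrArg Prod.snd hh)))
        have hfuncA : ∀ z', (x, z') ∈ DW.edges → z' = B :=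
          fun z' h => (hfW.1 _ ⟨hABm, hAv, hAw⟩).2 z' h
        rcases mem_cut_edges.mp hz with h | ⟨h, hn⟩ | ⟨h, hn⟩
        · exact (Prod.mk.injEq .. ▸ h).2
        · exact absurd (by rw [hfuncA z h]) hn
        · exact absurd (horE.1 _ h).1 (hWnE _ hAv)
      · have hxB : x ≠ B := (hnotB _ hWe hne).1
        have hyB : y ≠ B := (hnotB _ hWe hne).2
        have hxw : ∀ u, (u, x) ∉ DW.edges := fun u hu =>
          hxnin u (hmemW _ hu (fun hh => hxB (congrArg Prod.snd hh)))
        have hfunc : ∀ z', (x, z') ∈ DW.edges → z' = y :=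
          fun z' h => (hfW.1 _ ⟨hWe, (horW.1 _ hWe).1, hxw⟩).2 z' h
        have hxA : x ≠ A := by
          rintro rfl
          exact hyB (hfunc B hABm).symm
        rcases mem_cut_edges.mp hz with h | ⟨h, hn⟩ | ⟨h, hn⟩
        · have h1 : x = A := congrArg Prod.fst h
          exact absurd h1 hxA
        · exact hfunc z h
        · exact absurd (horE.1 _ h).1 (fun hh => hWnE x (horW.1 _ hWe).1 hh)
      · have hxC : x ≠ C := by
          rintro rfl
          exact hne (by rw [hCout y hEe])
        have hxD : x ≠ Dd := by
          rintro rfl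
          exact hxnin A hADm
        have hxw : ∀ u, (u, x) ∉ DE.edges := fun u hu =>
          hxnin u (hmemE _ hu (fun hh => hxD (congrArg Prod.snd hh)))
        have hfunc : ∀ z', (x, z') ∈ DE.edges → z' = y :=
          fun z' h => (hfE.1 _ ⟨hEe, (horE.1 _ hEe).1, hxw⟩).2 z' h
        rcases mem_cut_edges.mp hz with h | ⟨h, hn⟩ | ⟨h, hn⟩
        · have h1 : x = A := congrArg Prod.fst h
          have hxE : x ∈ DE.verts := (horE.1 _ hEe).1
          exact absurd (h1 ▸ hxE) (hWnE A hAv)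
        · exact absurd (horE.1 _ hEe).1 (hWnE x (horW.1 _ h).1)
        · exact hfunc z h
    · rintro ⟨y, x⟩ ⟨hxy, hxv, hxnout⟩
      refine ⟨⟨hxy, hxv, hxnout⟩, ?_⟩
      intro z hz
      rcases mem_cut_edges.mp hxy with hc | ⟨hWe, hne⟩ | ⟨hEe, hne⟩
      · obtain ⟨rfl, rfl⟩ := Prod.mk.injEq .. ▸ hc
        have hDe : ∀ u, (x, u) ∉ DE.edges := fun u hu =>
          hxnout u (hmemE _ hu (fun hh => hCD (congrArg Prod.fst hh).symm))
        have hfuncD : ∀ z', (z', x) ∈ DE.edges → z' = C :=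
          fun z' h => (hfE.2 _ ⟨hCDm, hDv, hDe⟩).2 z' h
        rcases mem_cut_edges.mp hz with h | ⟨h, hn⟩ | ⟨h, hn⟩
        · exact (Prod.mk.injEq .. ▸ h).1
        · exact absurd hDv (hWnE _ (horW.1 _ h).2)
        · exact absurd (by rw [hfuncD z h]) hn
      · have hxB : x ≠ B := (hnotB _ hWe hne).2
        have hyB : y ≠ B := (hnotB _ hWe hne).1
        have hxe : ∀ u, (x, u) ∉ DW.edges := by
          intro u hu
          by_cases hcq : (x, u) = ((A : ℕ), (B : ℕ))
          · have hxA : x = A := congrArg Prod.fst hcq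
            exact hxnout Dd (by rw [hxA]; exact hADm)
          · exact hxnout u (hmemW _ hu hcq)
        have hfunc : ∀ z', (z', x) ∈ DW.edges → z' = y :=
          fun z' h => (hfW.2 _ ⟨hWe, (horW.1 _ hWe).2, hxe⟩).2 z' h
        rcases mem_cut_edges.mp hz with h | ⟨h, hn⟩ | ⟨h, hn⟩
        · have h1 : x = Dd := congrArg Prod.snd h
          have hxW : x ∈ DW.verts := (horW.1 _ hWe).2
          exact absurd hDv (hWnE Dd (h1 ▸ hxW))
        · exact hfunc z h
        · exact absurd (horE.1 _ h).2 (fun hh => hWnE x (horW.1 _ hWe).2 hh)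
      · have hxC : x ≠ C := (hnotC _ hEe hne).2
        have hxe : ∀ u, (x, u) ∉ DE.edges := fun u hu =>
          hxnout u (hmemE _ hu (fun hh => hxC (congrArg Prod.fst hh)))
        have hfunc : ∀ z', (z', x) ∈ DE.edges → z' = y :=
          fun z' h => (hfE.2 _ ⟨hEe, (horE.1 _ hEe).2, hxe⟩).2 z' h
        have hxD : x ≠ Dd := by
          rintro rfl
          exact hne (by rw [← hfunc C hCDm])
        rcases mem_cut_edges.mp hz with h | ⟨h, hn⟩ | ⟨h, hn⟩
        · have h1 : x = Dd := congrArg Prod.snd h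
          exact absurd h1 hxD
        · exact absurd ((horW.1 _ h).2) (fun hh => hWnE x hh (horE.1 _ hEe).2)
        · exact hfunc z h
  · -- inner vertex
    obtain ⟨v, hv, ⟨p, hp⟩, ⟨q, hq⟩⟩ := hinW
    have hvB : v ≠ B := by
      rintro rfl
      exact hBnoout q hq
    have hv' : v ∈ D'.verts := hvertW v hv hvB
    have hpin : (p, v) ∈ D'.edges :=
      hmemW _ hp (fun hh => hvB (congrArg Prod.snd hh))
    by_cases hq' : (v, q) = ((A : ℕ), (B : ℕ))
    · have hvA : v = A := congrArg Prod.fst hq'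
      exact ⟨v, hv', ⟨p, hpin⟩, ⟨Dd, by rw [hvA]; exact hADm⟩⟩
    · exact ⟨v, hv', ⟨p, hpin⟩, ⟨q, hmemW _ hq hq'⟩⟩

end CutCase


/-- Every global K-graph is a weakly connected, asemicyclic and
`W`-`E`-functional oriented graph that has an inner vertex. -/
theorem global_K_graph_properties (G : CTree) (hG : IsConstruction G) :
    G.rootGraph.IsOriented ∧ G.rootGraph.WeaklyConnected ∧
    G.rootGraph.Asemicyclic ∧ G.rootGraph.WEFunctional ∧
    ∃ a, G.rootGraph.isInner a := by
  induction hG with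
  | leaf D ε h =>
    obtain ⟨h1, h2, h3, h4, h5⟩ := basicK_props h
    exact ⟨h1, h2, h3, h4, h5⟩
  | node D ε eW eE GW GE hW hE hdisj heW heE hD hXYC hεW hεE ihW ihE =>
    obtain ⟨horW, hwcW, hacW, hfW, hinW⟩ := ihW
    obtain ⟨horE, hwcE, hacE, hfE, hinE⟩ := ihE
    have hroot : (CTree.node D ε eW eE GW GE).rootGraph = D := rfl
    rw [hroot, hD]
    obtain ⟨h1, h2, h3, h4, h5⟩ :=
      cut_props horW horE hdisj heW heE hwcW hwcE hacW hacE hfW hfE hinW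
    exact ⟨h1, h2, h3, h4, h5⟩

end PluralCuts
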